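/- Let F be a number field with adèle ring 𝔸. Define F⟨t⟩ = F((t)) ∩ 𝔸⟨t⟩, i.e. the set of Laurent series Σ aᵢtⁱ ∈ F((t)) such that aᵢ ∈ 𝒪_v for all i for almost all finite places v (uniformly in i is not required; the condition is that the series lies in 𝒪_v((t)) for almost all v). Then F⟨t⟩ is a subfield of F((t)). -/

import Mathlib

/-!
STATEMENT 8: Let `F` be a number field.  Define `F⟨t⟩ ⊆ F((t))` as the set of
Laurent series `Σ aᵢ tⁱ` over `F` such that for all but finitely many finite
places `v` of `F` all coefficients `aᵢ` lie in `𝒪_v` (i.e. the series lies in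
`𝒪_v((t))` for almost all `v`).  Then `F⟨t⟩` is a subfield of `F((t))`.

Finite places are the height-one primes of the ring of integers, and
`aᵢ ∈ 𝒪_v` is expressed by `v.valuation aᵢ ≤ 1`.
-/

open IsDedekindDomain

section Aux

variable {F : Type*} [Field F] [NumberField F]

/-- Only finitely many places have valuation greater than one. -/
lemma Ft_finite_gt_one (k : F) :
    {v : HeightOneSpectrum (NumberField.RingOfIntegers F) | 1 < v.valuation F k}.Finite := by
  exact HeightOneSpectrum.Support.finite (NumberField.RingOfIntegers F) k

/-- For a nonzero element, only finitely many places have valuation different from one. -/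
lemma Ft_finite_ne_one (k : F) (hk : k ≠ 0) :
    {v : HeightOneSpectrum (NumberField.RingOfIntegers F) | v.valuation F k ≠ 1}.Finite := by
  apply ((Ft_finite_gt_one k).union (Ft_finite_gt_one k⁻¹)).subset
  intro v hv
  rcases lt_or_gt_of_ne (hv : v.valuation F k ≠ 1) with h | h
  · right
    rw [Set.mem_setOf_eq, map_inv₀]
    exact (one_lt_inv₀ (zero_lt_iff.mpr ((v.valuation F).ne_zero_iff.mpr hk))).mpr h
  · left; exact h

/-- If all coefficients of `x` are `v`-integral and the leading coefficient is a `v`-unit,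
then all coefficients of `x⁻¹` are `v`-integral. -/
lemma Ft_inv_good {x : LaurentSeries F} (hx : x ≠ 0)
    (v : HeightOneSpectrum (NumberField.RingOfIntegers F))
    (h : ∀ i : ℤ, v.valuation F (x.coeff i) ≤ 1)
    (hl : v.valuation F (x.coeff x.order) = 1) :
    ∀ i : ℤ, v.valuation F (x⁻¹.coeff i) ≤ 1 := by
  set O : Subring F := (v.valuation F).integer with hO
  set X : HahnSeries ℤ O :=
    { coeff := fun i => (⟨x.coeff i, h i⟩ : O)
      isPWO_support' := by
        apply x.isPWO_support'.mono
        intro i hi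
        simp only [Function.mem_support, ne_eq, Subtype.ext_iff] at hi ⊢
        simpa using hi } with hXdef
  have hXcoeff : ∀ i : ℤ, (X.coeff i : F) = x.coeff i := fun i => rfl
  have hXx : X.map (O.subtype : O →+* F) = x := by
    ext i
    simp [HahnSeries.map_coeff, hXcoeff]
  have hX0 : X ≠ 0 := by
    intro h0
    apply hx
    ext i
    have : X.coeff i = 0 := by rw [h0]; rfl
    have := congrArg (Subtype.val) this
    simpa [hXcoeff] using this
  have hsupp : X.support = x.support := by
    ext i
    simp only [HahnSeries.mem_support, ne_eq, Subtype.ext_iff]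
    constructor
    · intro hne hzero
      exact hne (by simpa [hXcoeff] using hzero)
    · intro hne hzero
      exact hne (by simpa [hXcoeff] using hzero)
  have minEq : ∀ (s t : Set ℤ) (_ : s = t) (hs : s.IsWF) (ht : t.IsWF)
      (hns : s.Nonempty) (hnt : t.Nonempty), hs.min hns = ht.min hnt := by
    rintro s t rfl hs ht hns hnt; rfl
  have horder : X.order = x.order := by
    rw [HahnSeries.order_of_ne hX0, HahnSeries.order_of_ne hx]
    exact minEq _ _ hsupp _ _ _ _
  have hlead : IsUnit X.leadingCoeff := by
    rw [(Valuation.integer.integers (v.valuation F)).isUnit_iff_valuation_eq_one]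
    have hLC : X.leadingCoeff = X.coeff X.order := by
      exact HahnSeries.leadingCoeff_eq
    rw [hLC, horder]
    exact hl
  obtain ⟨U, hU⟩ := HahnSeries.isUnit_iff.mpr hlead
  have hmapmul : ((U : HahnSeries ℤ O) * ((U⁻¹ : (HahnSeries ℤ O)ˣ) : HahnSeries ℤ O)).map
      (O.subtype : O →+* F)
      = ((U : HahnSeries ℤ O).map (O.subtype : O →+* F)) *
        (((U⁻¹ : (HahnSeries ℤ O)ˣ) : HahnSeries ℤ O).map (O.subtype : O →+* F)) :=
    HahnSeries.map_mul ((O.subtype : O →+* F) : O →ₙ+* F)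
  rw [U.mul_inv] at hmapmul
  have hone : ((1 : HahnSeries ℤ O)).map (O.subtype : O →+* F) = (1 : LaurentSeries F) := by
    ext i
    by_cases hi : i = 0 <;> simp [hi, HahnSeries.coeff_one]
  rw [hone, hU, hXx] at hmapmul
  have hinv : x⁻¹ = ((U⁻¹ : (HahnSeries ℤ O)ˣ) : HahnSeries ℤ O).map (O.subtype : O →+* F) :=
    inv_eq_of_mul_eq_one_right hmapmul.symm
  intro i
  rw [hinv]
  simp only [HahnSeries.map_coeff]
  exact ((U⁻¹ : (HahnSeries ℤ O)ˣ) : HahnSeries ℤ O).coeff i |>.2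

end Aux

theorem Ft_is_subfield (F : Type*) [Field F] [NumberField F] :
    ∃ K' : Subfield (LaurentSeries F),
      (K' : Set (LaurentSeries F)) =
        {x : LaurentSeries F |
          {v : HeightOneSpectrum (NumberField.RingOfIntegers F) |
            ¬ ∀ i : ℤ, v.valuation F (x.coeff i) ≤ 1}.Finite} := by
  refine ⟨{
    carrier := {x : LaurentSeries F |
      {v : HeightOneSpectrum (NumberField.RingOfIntegers F) |
        ¬ ∀ i : ℤ, v.valuation F (x.coeff i) ≤ 1}.Finite}
    zero_mem' := by
      apply Set.Finite.subset Set.finite_empty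
      intro v hv
      exact hv (fun i => by simp)
    one_mem' := by
      apply Set.Finite.subset Set.finite_empty
      intro v hv
      refine hv (fun i => ?_)
      by_cases hi : i = 0 <;> simp [HahnSeries.coeff_one, hi]
    add_mem' := by
      intro a b ha hb
      apply (ha.union hb).subset
      intro v hv
      simp only [Set.mem_setOf_eq, Set.mem_union] at hv ⊢
      by_contra hcon
      simp only [Set.mem_union, Set.mem_setOf_eq, not_or, not_not] at hcon
      obtain ⟨h1, h2⟩ := hcon
      apply hv
      intro i
      rw [HahnSeries.coeff_add]
      exact le_trans ((v.valuation F).map_add _ _) (max_le (h1 i) (h2 i))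
    neg_mem' := by
      intro a ha
      apply ha.subset
      intro v hv
      simp only [Set.mem_setOf_eq] at hv ⊢
      intro hcon
      apply hv
      intro i
      rw [HahnSeries.coeff_neg, Valuation.map_neg]
      exact hcon i
    mul_mem' := by
      intro a b ha hb
      apply (ha.union hb).subset
      intro v hv
      simp only [Set.mem_setOf_eq, Set.mem_union] at hv ⊢
      by_contra hcon
      simp only [Set.mem_union, Set.mem_setOf_eq, not_or, not_not] at hcon
      obtain ⟨h1, h2⟩ := hcon
      apply hv
      intro i
      rw [HahnSeries.coeff_mul]
      apply Valuation.map_sum_le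
      intro ij _
      calc v.valuation F (a.coeff ij.1 * b.coeff ij.2)
          = v.valuation F (a.coeff ij.1) * v.valuation F (b.coeff ij.2) := map_mul _ _ _
        _ ≤ 1 * 1 := mul_le_mul' (h1 ij.1) (h2 ij.2)
        _ = 1 := one_mul 1
    inv_mem' := by
      intro x hx
      by_cases hx0 : x = 0
      · subst hx0
        rw [inv_zero]
        apply Set.Finite.subset Set.finite_empty
        intro v hv
        exact hv (fun i => by simp)
      · simp only [Set.mem_setOf_eq] at hx ⊢
        have hlc : x.coeff x.order ≠ 0 := fun h => hx0 (HahnSeries.coeff_order_eq_zero.mp h)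
        apply (hx.union (Ft_finite_ne_one (x.coeff x.order) hlc)).subset
        intro v hv
        simp only [Set.mem_setOf_eq, Set.mem_union] at hv ⊢
        by_contra hcon
        simp only [Set.mem_union, Set.mem_setOf_eq, not_or, not_not] at hcon
        exact hv (Ft_inv_good hx0 v hcon.1 hcon.2) }, rfl⟩
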